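/- Assume λ_tot = λ₂ + λ_net with λ₂ > 0 and λ_net ≥ 0, and let π be a stationary distribution of the free chain with parameters (λ₁, λ_tot, μ, θ) such that Σ_{x∈ℕ²} x₂·π(x) < ∞. Then the fixed-point equation λ_net = θ·Σ_{x∈ℕ²} x₂·π(x) holds if and only if π(0,0) = 1 − ϱ, where ϱ = (λ₁ + λ₂)/μ. -/

import Mathlib

open Filter Topology

/-- `π` is a stationary distribution of the free chain with parameters
`(l1, lt, mu, th)` (arrival rates `l1`, `lt`, service rate `mu`, mobility rate `th`). -/
def IsStationaryFree (l1 lt mu th : ℝ) (π : ℕ × ℕ → ℝ) : Prop :=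
  (∀ x, 0 ≤ π x) ∧ HasSum π 1 ∧
    ∀ x1 x2 : ℕ,
      π (x1, x2) * (l1 + lt + (if (x1, x2) ≠ ((0 : ℕ), (0 : ℕ)) then mu else 0)
          + th * (x2 : ℝ))
        = l1 * (if 1 ≤ x1 then π (x1 - 1, x2) else 0)
          + lt * (if 1 ≤ x2 then π (x1, x2 - 1) else 0)
          + mu * ((x1 : ℝ) + 1) / ((x1 : ℝ) + 1 + (x2 : ℝ)) * π (x1 + 1, x2)
          + (mu * ((x2 : ℝ) + 1) / ((x1 : ℝ) + (x2 : ℝ) + 1) + th * ((x2 : ℝ) + 1))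
              * π (x1, x2 + 1)

/-- Sum of `f` over the diagonal level `{x : x₁ + x₂ = n}`. -/
noncomputable def levA (f : ℕ × ℕ → ℝ) (n : ℕ) : ℝ := ∑ k ∈ Finset.range (n+1), f (k, n-k)

/-- Sum of `x₂ · f x` over the diagonal level `{x : x₁ + x₂ = n}`. -/
noncomputable def levB (f : ℕ × ℕ → ℝ) (n : ℕ) : ℝ :=
  ∑ k ∈ Finset.range (n+1), ((n-k : ℕ) : ℝ) * f (k, n-k)

/-- The equivalence `(Σ n, Fin (n+1)) ≃ ℕ × ℕ` sending `⟨n, k⟩` to `(k, n - k)`,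
which partitions `ℕ²` into diagonal levels. -/
def natSigmaEquiv : (Σ n : ℕ, Fin (n+1)) ≃ ℕ × ℕ where
  toFun p := (p.2, p.1 - p.2)
  invFun x := ⟨x.1 + x.2, ⟨x.1, by omega⟩⟩
  left_inv p := by
    obtain ⟨n, k⟩ := p
    have hk : (k:ℕ) ≤ n := Nat.lt_succ_iff.mp k.2
    have h : (k:ℕ) + (n - (k:ℕ)) = n := by omega
    refine Sigma.ext (by simpa using h) ?_
    rw [Fin.heq_ext_iff (by simp [h])]
  right_inv x := by
    obtain ⟨a, b⟩ := x
    simp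

lemma hasSum_levA (f : ℕ × ℕ → ℝ) (a : ℝ) (hf : HasSum f a) : HasSum (levA f) a := by
  have h1 : HasSum (f ∘ natSigmaEquiv) a := (Equiv.hasSum_iff natSigmaEquiv).2 hf
  have h2 := h1.sigma (fun n => hasSum_fintype (fun k : Fin (n+1) => f (natSigmaEquiv ⟨n, k⟩)))
  convert h2 using 2 with n
  rw [levA, ← Fin.sum_univ_eq_sum_range]
  rfl

lemma hasSum_levB (f : ℕ × ℕ → ℝ) (a : ℝ)
    (hf : HasSum (fun x : ℕ × ℕ => (x.2 : ℝ) * f x) a) : HasSum (levB f) a := by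
  have h1 : HasSum ((fun x : ℕ × ℕ => (x.2 : ℝ) * f x) ∘ natSigmaEquiv) a :=
    (Equiv.hasSum_iff natSigmaEquiv).2 hf
  have h2 := h1.sigma (fun n => hasSum_fintype
    (fun k : Fin (n+1) => (fun x : ℕ × ℕ => (x.2 : ℝ) * f x) (natSigmaEquiv ⟨n, k⟩)))
  convert h2 using 2 with n
  rw [levB, ← Fin.sum_univ_eq_sum_range]
  rfl

/-- Step 1: summing the balance equations over the diagonal level `n` gives a
recursion relating consecutive levels; iterating it yields the "cut" identity:
the flow up across level `n` equals the flow down. -/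
lemma level_cut (l1 lt mu th : ℝ) (π : ℕ × ℕ → ℝ)
    (hb : ∀ x1 x2 : ℕ,
      π (x1, x2) * (l1 + lt + (if (x1, x2) ≠ ((0 : ℕ), (0 : ℕ)) then mu else 0)
          + th * (x2 : ℝ))
        = l1 * (if 1 ≤ x1 then π (x1 - 1, x2) else 0)
          + lt * (if 1 ≤ x2 then π (x1, x2 - 1) else 0)
          + mu * ((x1 : ℝ) + 1) / ((x1 : ℝ) + 1 + (x2 : ℝ)) * π (x1 + 1, x2)
          + (mu * ((x2 : ℝ) + 1) / ((x1 : ℝ) + (x2 : ℝ) + 1) + th * ((x2 : ℝ) + 1))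
              * π (x1, x2 + 1)) :
    ∀ n : ℕ, (l1 + lt) * levA π n = mu * levA π (n+1) + th * levB π (n+1) := by
  -- The μ/θ part of the summed right-hand side over level m+1
  have muth : ∀ m : ℕ,
      ∑ k ∈ Finset.range (m+2),
        (mu * ((k : ℝ) + 1) / ((k : ℝ) + 1 + ((m+1-k : ℕ) : ℝ)) * π (k + 1, m+1-k)
          + (mu * (((m+1-k : ℕ) : ℝ) + 1) / ((k : ℝ) + ((m+1-k : ℕ) : ℝ) + 1)
              + th * (((m+1-k : ℕ) : ℝ) + 1)) * π (k, m+1-k+1))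
        = mu * levA π (m+2) + th * levB π (m+2) := by
    intro m
    have h1 : ∀ k ∈ Finset.range (m+2),
        (mu * ((k : ℝ) + 1) / ((k : ℝ) + 1 + ((m+1-k : ℕ) : ℝ)) * π (k + 1, m+1-k)
          + (mu * (((m+1-k : ℕ) : ℝ) + 1) / ((k : ℝ) + ((m+1-k : ℕ) : ℝ) + 1)
              + th * (((m+1-k : ℕ) : ℝ) + 1)) * π (k, m+1-k+1))
        = mu / ((m:ℝ)+2) * (((k : ℝ) + 1) * π (k + 1, m+1-k))
          + mu / ((m:ℝ)+2) * (((m:ℝ) + 2 - (k:ℝ)) * π (k, m+2-k))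
          + th * (((m:ℝ) + 2 - (k:ℝ)) * π (k, m+2-k)) := by
      intro k hk
      have hk' : k ≤ m + 1 := Nat.lt_succ_iff.mp (Finset.mem_range.mp hk)
      have hcast : ((m+1-k : ℕ) : ℝ) = (m : ℝ) + 1 - (k : ℝ) := by
        push_cast [Nat.cast_sub hk']; ring
      have harg : m+1-k+1 = m+2-k := by omega
      rw [hcast, harg]
      have hd : (k:ℝ) + 1 + ((m:ℝ) + 1 - (k:ℝ)) = (m:ℝ) + 2 := by ring
      have hd2 : (k:ℝ) + ((m:ℝ) + 1 - (k:ℝ)) + 1 = (m:ℝ) + 2 := by ring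
      rw [hd, hd2]
      ring
    rw [Finset.sum_congr rfl h1]
    simp only [Finset.sum_add_distrib, ← Finset.mul_sum]
    have hS3 : ∑ k ∈ Finset.range (m+2), ((k : ℝ) + 1) * π (k + 1, m+1-k)
        = ∑ j ∈ Finset.range (m+3), (j : ℝ) * π (j, m+2-j) := by
      rw [Finset.sum_range_succ' (fun j => (j : ℝ) * π (j, m+2-j)) (m+2)]
      simp [Nat.succ_sub_succ]
    have hS4 : ∑ k ∈ Finset.range (m+2), ((m:ℝ) + 2 - (k:ℝ)) * π (k, m+2-k)
        = levB π (m+2) := by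
      have hterm : ∀ k ∈ Finset.range (m+2),
          ((m:ℝ) + 2 - (k:ℝ)) * π (k, m+2-k) = ((m+2-k : ℕ) : ℝ) * π (k, m+2-k) := by
        intro k hk
        have hk' : k ≤ m + 1 := Nat.lt_succ_iff.mp (Finset.mem_range.mp hk)
        congr 1
        push_cast [Nat.cast_sub (by omega : k ≤ m+2)]
        ring
      have hlev : levB π (m+2) = ∑ k ∈ Finset.range (m+2), ((m+2-k : ℕ) : ℝ) * π (k, m+2-k) := by
        rw [levB, Finset.sum_range_succ]
        simp
      rw [Finset.sum_congr rfl hterm, hlev]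
    have hcomb : (∑ j ∈ Finset.range (m+3), (j : ℝ) * π (j, m+2-j)) + levB π (m+2)
        = ((m:ℝ)+2) * levA π (m+2) := by
      rw [levB, levA, ← Finset.sum_add_distrib, Finset.mul_sum]
      refine Finset.sum_congr rfl fun k hk => ?_
      have hk' : k ≤ m + 2 := Nat.lt_succ_iff.mp (Finset.mem_range.mp hk)
      have : ((m+2-k : ℕ) : ℝ) = (m:ℝ) + 2 - (k:ℝ) := by
        push_cast [Nat.cast_sub hk']; ring
      rw [this]; ring
    rw [hS3, hS4]
    have h5 : (∑ j ∈ Finset.range (m+3), (j : ℝ) * π (j, m+2-j))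
        = ((m:ℝ)+2) * levA π (m+2) - levB π (m+2) := by linarith
    rw [h5]
    have hden : (m:ℝ) + 2 ≠ 0 := by positivity
    field_simp
    ring
  -- Level recursion for m + 1
  have key : ∀ m : ℕ,
      (l1 + lt) * levA π (m+1) + mu * levA π (m+1) + th * levB π (m+1)
        = (l1 + lt) * levA π m + mu * levA π (m+2) + th * levB π (m+2) := by
    intro m
    have H : ∑ k ∈ Finset.range (m+2),
        π (k, m+1-k) * (l1 + lt + (if (k, m+1-k) ≠ ((0 : ℕ), (0 : ℕ)) then mu else 0)
          + th * ((m+1-k : ℕ) : ℝ))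
      = ∑ k ∈ Finset.range (m+2),
        (l1 * (if 1 ≤ k then π (k - 1, m+1-k) else 0)
          + lt * (if 1 ≤ m+1-k then π (k, m+1-k-1) else 0)
          + mu * ((k : ℝ) + 1) / ((k : ℝ) + 1 + ((m+1-k : ℕ) : ℝ)) * π (k + 1, m+1-k)
          + (mu * (((m+1-k : ℕ) : ℝ) + 1) / ((k : ℝ) + ((m+1-k : ℕ) : ℝ) + 1)
              + th * (((m+1-k : ℕ) : ℝ) + 1)) * π (k, m+1-k+1)) :=
      Finset.sum_congr rfl fun k _ => hb k (m+1-k)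
    -- transform the left-hand side
    have hL : ∑ k ∈ Finset.range (m+2),
        π (k, m+1-k) * (l1 + lt + (if (k, m+1-k) ≠ ((0 : ℕ), (0 : ℕ)) then mu else 0)
          + th * ((m+1-k : ℕ) : ℝ))
        = (l1 + lt) * levA π (m+1) + mu * levA π (m+1) + th * levB π (m+1) := by
      have h1 : ∀ k ∈ Finset.range (m+2),
          π (k, m+1-k) * (l1 + lt + (if (k, m+1-k) ≠ ((0 : ℕ), (0 : ℕ)) then mu else 0)
            + th * ((m+1-k : ℕ) : ℝ))
          = (l1 + lt) * π (k, m+1-k) + mu * π (k, m+1-k)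
            + th * (((m+1-k : ℕ) : ℝ) * π (k, m+1-k)) := by
        intro k hk
        have hne : (k, m+1-k) ≠ ((0 : ℕ), (0 : ℕ)) := by
          simp only [ne_eq, Prod.mk.injEq, not_and]
          intro h0; omega
        rw [if_pos hne]; ring
      rw [Finset.sum_congr rfl h1]
      simp only [Finset.sum_add_distrib, ← Finset.mul_sum]
      rfl
    -- the two arrival sums
    have hS1 : ∑ k ∈ Finset.range (m+2), (if 1 ≤ k then π (k - 1, m+1-k) else 0)
        = levA π m := by
      rw [Finset.sum_range_succ']
      simp [levA, Nat.succ_sub_succ]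
    have hS2 : ∑ k ∈ Finset.range (m+2), (if 1 ≤ m+1-k then π (k, m+1-k-1) else 0)
        = levA π m := by
      have hterm : ∀ k ∈ Finset.range (m+1),
          (if 1 ≤ m+1-k then π (k, m+1-k-1) else 0) = π (k, m-k) := by
        intro k hk
        have hk' : k ≤ m := Nat.lt_succ_iff.mp (Finset.mem_range.mp hk)
        rw [if_pos (by omega)]
        congr 2
        omega
      rw [Finset.sum_range_succ, Finset.sum_congr rfl hterm]
      simp [levA]
    -- assemble the right-hand side
    have hR : ∑ k ∈ Finset.range (m+2),
        (l1 * (if 1 ≤ k then π (k - 1, m+1-k) else 0)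
          + lt * (if 1 ≤ m+1-k then π (k, m+1-k-1) else 0)
          + mu * ((k : ℝ) + 1) / ((k : ℝ) + 1 + ((m+1-k : ℕ) : ℝ)) * π (k + 1, m+1-k)
          + (mu * (((m+1-k : ℕ) : ℝ) + 1) / ((k : ℝ) + ((m+1-k : ℕ) : ℝ) + 1)
              + th * (((m+1-k : ℕ) : ℝ) + 1)) * π (k, m+1-k+1))
        = (l1 + lt) * levA π m + mu * levA π (m+2) + th * levB π (m+2) := by
      simp only [Finset.sum_add_distrib, ← Finset.mul_sum]
      rw [hS1, hS2]
      have hmt := muth m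
      rw [Finset.sum_add_distrib] at hmt
      linarith
    rw [hL, hR] at H
    exact H
  -- base case n = 0
  have base : (l1 + lt) * levA π 0 = mu * levA π 1 + th * levB π 1 := by
    have H := hb 0 0
    norm_num at H
    have hA0 : levA π 0 = π (0, 0) := by simp [levA]
    have hA1 : levA π 1 = π (0, 1) + π (1, 0) := by
      rw [levA]
      rw [Finset.sum_range_succ, Finset.sum_range_succ, Finset.sum_range_zero]
      norm_num
    have hB1 : levB π 1 = π (0, 1) := by
      rw [levB]
      rw [Finset.sum_range_succ, Finset.sum_range_succ, Finset.sum_range_zero]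
      norm_num
    have hzz : π ((0:ℕ), (0:ℕ)) = π 0 := rfl
    rw [hA0, hA1, hB1, hzz]
    have H' : π 0 * (l1 + lt) = mu * π (1, 0) + (mu + th) * π (0, 1) := H
    linarith
  intro n
  induction n with
  | zero => exact base
  | succ m ih =>
    have := key m
    linarith

theorem global_flow (l1 lt mu th : ℝ) (π : ℕ × ℕ → ℝ)
    (hπpos : ∀ x, 0 ≤ π x) (hπsum : HasSum π 1)
    (hb : ∀ x1 x2 : ℕ,
      π (x1, x2) * (l1 + lt + (if (x1, x2) ≠ ((0 : ℕ), (0 : ℕ)) then mu else 0)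
          + th * (x2 : ℝ))
        = l1 * (if 1 ≤ x1 then π (x1 - 1, x2) else 0)
          + lt * (if 1 ≤ x2 then π (x1, x2 - 1) else 0)
          + mu * ((x1 : ℝ) + 1) / ((x1 : ℝ) + 1 + (x2 : ℝ)) * π (x1 + 1, x2)
          + (mu * ((x2 : ℝ) + 1) / ((x1 : ℝ) + (x2 : ℝ) + 1) + th * ((x2 : ℝ) + 1))
              * π (x1, x2 + 1))
    (hsum : Summable (fun x : ℕ × ℕ => (x.2 : ℝ) * π x)) :
    l1 + lt = mu * (1 - π (0, 0)) + th * ∑' x : ℕ × ℕ, (x.2 : ℝ) * π x := by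
  set E := ∑' x : ℕ × ℕ, (x.2 : ℝ) * π x with hE
  have hA : HasSum (levA π) 1 := hasSum_levA π 1 hπsum
  have hB : HasSum (levB π) E := hasSum_levB π E hsum.hasSum
  have hA0 : levA π 0 = π (0, 0) := by simp [levA]
  have hB0 : levB π 0 = 0 := by simp [levB]
  -- shifted sums
  have hA1 : HasSum (fun n => levA π (n + 1)) (1 - π (0, 0)) := by
    have := (hasSum_nat_add_iff (f := levA π) 1 (g := 1 - π (0,0))).2
    apply this
    convert hA using 1
    · rfl
    simp [hA0]
  have hB1 : HasSum (fun n => levB π (n + 1)) E := by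
    have := (hasSum_nat_add_iff (f := levB π) 1 (g := E)).2
    apply this
    convert hB using 1
    · rfl
    simp [hB0]
  have hcut := level_cut l1 lt mu th π hb
  have hLHS : HasSum (fun n => (l1 + lt) * levA π n) ((l1 + lt) * 1) := hA.mul_left _
  have hRHS : HasSum (fun n => mu * levA π (n+1) + th * levB π (n+1))
      (mu * (1 - π (0, 0)) + th * E) := (hA1.mul_left mu).add (hB1.mul_left th)
  have hfun : (fun n => (l1 + lt) * levA π n)
      = fun n => mu * levA π (n+1) + th * levB π (n+1) := funext hcut
  rw [hfun] at hLHS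
  have := hLHS.unique hRHS
  linarith


/-- The fixed-point equation λ_net = θ·E[X₂] holds iff π(0,0) = 1 − ϱ
where ϱ = (λ₁ + λ₂)/μ. -/
theorem fixed_point_iff_empty_probability
    (l1 l2 lnet mu th : ℝ) (hl1 : 0 < l1) (hl2 : 0 < l2) (hlnet : 0 ≤ lnet)
    (hmu : 0 < mu) (hth : 0 ≤ th)
    (π : ℕ × ℕ → ℝ) (hπ : IsStationaryFree l1 (l2 + lnet) mu th π)
    (hsum : Summable (fun x : ℕ × ℕ => (x.2 : ℝ) * π x)) :
    (lnet = th * ∑' x : ℕ × ℕ, (x.2 : ℝ) * π x) ↔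
      π (0, 0) = 1 - (l1 + l2) / mu := by
  obtain ⟨hπpos, hπsum, hb⟩ := hπ
  have hg := global_flow l1 (l2 + lnet) mu th π hπpos hπsum hb hsum
  set E := ∑' x : ℕ × ℕ, (x.2 : ℝ) * π x with hE
  have hmu' : mu ≠ 0 := ne_of_gt hmu
  constructor
  · intro h
    have h2 : mu * (1 - π (0, 0)) = l1 + l2 := by linarith
    have hzz : π 0 = π ((0:ℕ), (0:ℕ)) := rfl
    rw [← hzz] at h2
    field_simp
    linear_combination -h2
  · intro h
    rw [h] at hg
    have : mu * (1 - (1 - (l1 + l2) / mu)) = l1 + l2 := by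
      field_simp
      ring
    linarith
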